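/- Let p be a prime number with p ≠ 5. Then for every e ∈ ℕ, the Fibonacci number F_{p^e} is not divisible by p. -/

import Mathlib

open Polynomial

/-- In a commutative ring, any root of `x^2 = x + 1` satisfies the Fibonacci power formula. -/
lemma pow_eq_fib_of_sq {R : Type*} [CommRing R] (x : R) (hx : x ^ 2 = x + 1) (n : ℕ) :
    x ^ (n + 1) = (Nat.fib (n + 1) : R) * x + (Nat.fib n : R) := by
  induction n with
  | zero => simp
  | succ n ih =>
    rw [pow_succ, ih, Nat.fib_add_two]
    push_cast
    linear_combination ((Nat.fib (n + 1) : R)) * hx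

/-- Let `p` be a prime number with `p ≠ 5`. Then for every `e ∈ ℕ`, the
Fibonacci number `F_{p^e}` is not divisible by `p`. -/
theorem prime_not_dvd_fib_pow (p : ℕ) (hp : p.Prime) (hp5 : p ≠ 5) (e : ℕ) :
    ¬ p ∣ Nat.fib (p ^ e) := by
  haveI : Fact p.Prime := ⟨hp⟩
  rcases Nat.eq_zero_or_pos e with rfl | he
  · simpa using hp.one_lt.ne'
  intro h
  -- Work in R = (ZMod p)[X] / (X² - X - 1)
  set f : (ZMod p)[X] := X ^ 2 - (X + 1) with hf
  have hdeg : (X + 1 : (ZMod p)[X]).degree < (2 : ℕ) := by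
    apply lt_of_le_of_lt (Polynomial.degree_add_le _ _)
    simp
  have hdegf : f.degree = 2 := by
    rw [hf, Polynomial.degree_sub_eq_left_of_degree_lt] <;>
      simp_all [Polynomial.degree_X_pow]
  have hinj : Function.Injective (AdjoinRoot.of f) :=
    AdjoinRoot.of.injective_of_degree_ne_zero (by rw [hdegf]; norm_num)
  haveI : CharP (AdjoinRoot f) p := charP_of_injective_ringHom hinj p
  set α : AdjoinRoot f := AdjoinRoot.root f with hα
  have hroot : α ^ 2 = α + 1 := by
    have := AdjoinRoot.eval₂_root f
    rw [hf] at this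
    simp only [Polynomial.eval₂_sub, Polynomial.eval₂_add, Polynomial.eval₂_X_pow,
      Polynomial.eval₂_X, Polynomial.eval₂_one] at this
    linear_combination this
  have hroot' : (1 - α) ^ 2 = (1 - α) + 1 := by linear_combination hroot
  -- the exponent
  obtain ⟨m, hm⟩ : ∃ m, p ^ e = m + 1 :=
    ⟨p ^ e - 1, (Nat.succ_pred_eq_of_pos (Nat.pow_pos hp.pos)).symm⟩
  have hfib0 : ((Nat.fib (p ^ e) : ZMod p)) = 0 := by
    exact_mod_cast (ZMod.natCast_eq_zero_iff _ _).mpr h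
  have hfib0' : ((Nat.fib (p ^ e) : AdjoinRoot f)) = 0 := by
    have : ((Nat.fib (p ^ e) : AdjoinRoot f)) = AdjoinRoot.of f (Nat.fib (p ^ e) : ZMod p) := by
      simp
    rw [this, hfib0, map_zero]
  set c : AdjoinRoot f := (Nat.fib m : AdjoinRoot f) with hc
  have h1 : α ^ (p ^ e) = c := by
    rw [hm, pow_eq_fib_of_sq α hroot m, ← hm, hfib0', zero_mul, zero_add]
  have h2 : (1 - α) ^ (p ^ e) = c := by
    rw [hm, pow_eq_fib_of_sq (1 - α) hroot' m, ← hm, hfib0', zero_mul, zero_add]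
  -- Frobenius: (1 - α)^(p^e) = 1 - α^(p^e)
  have h3 : (1 - α) ^ (p ^ e) = 1 - α ^ (p ^ e) := by
    rw [sub_pow_char_pow, one_pow]
  have h2c : (2 : AdjoinRoot f) * c = 1 := by
    have := h3.symm.trans h2
    rw [h1] at this
    linear_combination -this
  -- product of the two roots is -1
  have hprod : c * c = (-1 : AdjoinRoot f) ^ (p ^ e) := by
    rw [show c * c = α ^ (p ^ e) * (1 - α) ^ (p ^ e) by rw [h1, h2], ← mul_pow]
    congr 1
    linear_combination -hroot
  -- parity
  have hcast : ∀ n : ℕ, (n : AdjoinRoot f) = 0 → p ∣ n := fun n hn =>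
    (CharP.cast_eq_zero_iff (AdjoinRoot f) p n).mp hn
  rcases hp.eq_two_or_odd' with rfl | hodd
  · -- p = 2 : p^e even
    have : ((-1 : AdjoinRoot f)) ^ (2 ^ e) = 1 := by
      have : Even (2 ^ e) := (Nat.even_pow' he.ne').mpr even_two
      exact this.neg_one_pow
    rw [this] at hprod
    have h30 : ((3 : ℕ) : AdjoinRoot f) = 0 := by
      push_cast
      linear_combination (2 * c + 1) * h2c - 4 * hprod
    have := hcast 3 h30
    omega
  · -- p odd : p^e odd
    have : ((-1 : AdjoinRoot f)) ^ (p ^ e) = -1 := (hodd.pow).neg_one_pow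
    rw [this] at hprod
    have h50 : ((5 : ℕ) : AdjoinRoot f) = 0 := by
      push_cast
      linear_combination (-(2 * c + 1)) * h2c + 4 * hprod
    have := hcast 5 h50
    exact hp5 ((Nat.prime_dvd_prime_iff_eq hp (by norm_num)).mp this)
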